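/- In the exterior algebra over ℚ generated by degree-1 elements ê₁, ..., ê_d, the following holds: for every subset S ⊆ {1,...,d}² and every positive integer n, the element ∏_{(i,j)∈S}(êᵢ∧êⱼ) + (3n)^{|S|} can be written as a polynomial with nonnegative rational coefficients in the elements êᵢ∧êⱼ + n and êⱼ∧êᵢ + n ((i,j) ranging over all pairs), using only addition and multiplication. -/

import Mathlib

open ExteriorAlgebra

/-- In the exterior algebra over `ℚ` on generators `ê₁, …, ê_d`, for every
`S ⊆ {1,…,d}²` and every positive integer `n`, the element
`∏_{(i,j)∈S} êᵢ∧êⱼ + (3n)^{|S|}` is a polynomial with nonnegative rational coefficients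
(using only addition and multiplication) in the elements `êᵢ∧êⱼ + n`
(for all pairs `(i,j)`, which includes `êⱼ∧êᵢ + n`). -/
theorem wedge_prod_mem_closure (d : ℕ) (S : Finset (Fin d × Fin d)) (n : ℕ) (hn : 0 < n) :
    (S.toList.map fun p =>
        (ι ℚ (Pi.single p.1 (1 : ℚ)) * ι ℚ (Pi.single p.2 (1 : ℚ)) :
          ExteriorAlgebra ℚ (Fin d → ℚ))).prod
      + ((3 * n : ℕ) : ExteriorAlgebra ℚ (Fin d → ℚ)) ^ S.card ∈
    Subsemiring.closure
      ({x : ExteriorAlgebra ℚ (Fin d → ℚ) | ∃ i j : Fin d,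
          x = ι ℚ (Pi.single i (1 : ℚ)) * ι ℚ (Pi.single j (1 : ℚ)) + (n : ExteriorAlgebra ℚ (Fin d → ℚ))} ∪
       {x : ExteriorAlgebra ℚ (Fin d → ℚ) | ∃ q : ℚ, 0 ≤ q ∧
          x = algebraMap ℚ (ExteriorAlgebra ℚ (Fin d → ℚ)) q}) := by
  set E := ExteriorAlgebra ℚ (Fin d → ℚ)
  set f : Fin d × Fin d → E := fun p =>
    ι ℚ (Pi.single p.1 (1 : ℚ)) * ι ℚ (Pi.single p.2 (1 : ℚ)) with hf
  set C := Subsemiring.closure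
      ({x : E | ∃ i j : Fin d,
          x = ι ℚ (Pi.single i (1 : ℚ)) * ι ℚ (Pi.single j (1 : ℚ)) + (n : E)} ∪
       {x : E | ∃ q : ℚ, 0 ≤ q ∧ x = algebraMap ℚ E q}) with hC
  -- generators belong to the closure
  have hgen : ∀ i j : Fin d,
      ι ℚ (Pi.single i (1 : ℚ)) * ι ℚ (Pi.single j (1 : ℚ)) + (n : E) ∈ C :=
    fun i j => Subsemiring.subset_closure (Or.inl ⟨i, j, rfl⟩)
  -- anticommutation: -(f p) = f p.swap
  have hswap : ∀ p : Fin d × Fin d, -(f p) = f p.swap := by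
    intro p
    have h := ι_add_mul_swap (R := ℚ) (M := (Fin d → ℚ))
      (Pi.single p.1 (1 : ℚ)) (Pi.single p.2 (1 : ℚ))
    simp only [hf, Prod.fst_swap, Prod.snd_swap]
    exact neg_eq_of_add_eq_zero_right h
  -- the key step
  have step : ∀ (a : E) (k : ℕ) (P : E), a + (n : E) ∈ C → -a + (n : E) ∈ C →
      P + ((3 * n : ℕ) : E) ^ k ∈ C → -P + ((3 * n : ℕ) : E) ^ k ∈ C →
      a * P + ((3 * n : ℕ) : E) ^ (k + 1) ∈ C := by
    intro a k P ha ha' hP hP'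
    set N : E := ((n : ℕ) : E) with hN
    set Ck : E := ((3 * n : ℕ) : E) ^ k with hCk
    have hmem : (a + N) * (P + Ck) + (N * (-P + Ck) + Ck * (-a + N)) ∈ C := by
      refine add_mem (mul_mem ha hP) (add_mem (mul_mem ?_ hP') (mul_mem ?_ ha'))
      · exact natCast_mem C n
      · exact pow_mem (natCast_mem C (3 * n)) k
    have hca : Ck * a = a * Ck := ((Nat.cast_commute (3 * n) a).pow_left k).eq
    have hcn : Ck * N = N * Ck := ((Nat.cast_commute (3 * n) N).pow_left k).eq
    have key : (a + N) * (P + Ck) + (N * (-P + Ck) + Ck * (-a + N))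
        = a * P + ((3 * n : ℕ) : E) ^ (k + 1) := by
      have h3 : ((3 * n : ℕ) : E) ^ (k + 1) = Ck * ((3 * n : ℕ) : E) := by
        rw [hCk, ← pow_succ]
      rw [h3]
      push_cast
      simp only [mul_add, add_mul, mul_neg, neg_mul]
      rw [mul_neg, mul_neg, hca, hcn]
      have h5 : Ck * (3 : E) = (3 : E) * Ck :=
        ((Nat.cast_commute (3 * n) (3 : E)).pow_left k).eq
      ring_nf
      rw [show n * 3 = n + n + n by ring, Nat.cast_add, Nat.cast_add, ← hN, mul_add, mul_add, hcn]
      abel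
    rwa [key] at hmem
  -- main induction on lists
  have key : ∀ L : List (Fin d × Fin d),
      ((L.map f).prod + ((3 * n : ℕ) : E) ^ L.length ∈ C) ∧
      (-(L.map f).prod + ((3 * n : ℕ) : E) ^ L.length ∈ C) := by
    intro L
    induction L with
    | nil =>
      constructor
      · simp only [List.map_nil, List.prod_nil, List.length_nil, pow_zero]
        exact add_mem (one_mem C) (one_mem C)
      · simp only [List.map_nil, List.prod_nil, List.length_nil, pow_zero,
          neg_add_cancel]
        exact zero_mem C
    | cons p L ih =>
      obtain ⟨hP, hP'⟩ := ih
      have ha : f p + (n : E) ∈ C := hgen p.1 p.2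
      have ha' : -(f p) + (n : E) ∈ C := by rw [hswap p]; exact hgen p.2 p.1
      constructor
      · simpa using step (f p) L.length _ ha ha' hP hP'
      · have := step (-(f p)) L.length _ ha' (by rwa [neg_neg]) hP hP'
        rw [neg_mul] at this
        simpa using this
  have := (key S.toList).1
  rwa [Finset.length_toList] at this
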